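/- For any positive reals β, γ with βγ > 1 and any x > 0, (βγ − 1)x / ((γx + 1)(x + β)) ≤ (√(βγ) − 1)/(√(βγ) + 1). -/
import Mathlib

theorem stmt_6 (β γ x : ℝ) (hβ : 0 < β) (hγ : 0 < γ) (h1 : 1 < β * γ) (hx : 0 < x) :
    (β * γ - 1) * x / ((γ * x + 1) * (x + β)) ≤
      (Real.sqrt (β * γ) - 1) / (Real.sqrt (β * γ) + 1) := by
  have hs : Real.sqrt (β * γ) ^ 2 = β * γ := Real.sq_sqrt (by positivity)
  have hs1 : 1 < Real.sqrt (β * γ) := by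
    nlinarith [Real.sqrt_nonneg (β * γ)]
  have hsb : Real.sqrt β ^ 2 = β := Real.sq_sqrt hβ.le
  have hsg : Real.sqrt γ ^ 2 = γ := Real.sq_sqrt hγ.le
  have hmul : Real.sqrt β * Real.sqrt γ = Real.sqrt (β * γ) :=
    (Real.sqrt_mul hβ.le γ).symm
  have hexp : γ * x ^ 2 - 2 * Real.sqrt (β * γ) * x + β
      = (Real.sqrt γ * x - Real.sqrt β) ^ 2 := by
    linear_combination -x ^ 2 * hsg - hsb + 2 * x * hmul
  have key : 0 ≤ (Real.sqrt (β * γ) - 1) * (γ * x ^ 2 - 2 * Real.sqrt (β * γ) * x + β) := by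
    rw [hexp]; exact mul_nonneg (by linarith) (sq_nonneg _)
  rw [div_le_div_iff₀ (by positivity) (by positivity)]
  nlinarith [key, hs]
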